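/- If n > 9 is odd and composite, then |S(n)| ≤ φ(n)/4, where φ is Euler's totient function. -/

import Mathlib

/-- The odd part of `m`, i.e. `m` with all factors of 2 removed. -/
def oddPart (m : ℕ) : ℕ := ordCompl[2] m

/-- The set of strong liars for `n`. -/
def strongLiars (n : ℕ) : Set (ZMod n) :=
  {a | a ^ oddPart (n - 1) = 1 ∨
    ∃ i < (n - 1).factorization 2, a ^ (2 ^ i * oddPart (n - 1)) = -1}

/-- `|S(n)|`, the number of strong liars for `n`. -/
noncomputable def strongLiarCount (n : ℕ) : ℕ := Nat.card (strongLiars n)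


noncomputable def fOne (s m : ℕ) : ℕ := Nat.card {x : ZMod m // x ^ s = 1}
noncomputable def fNeg (s m : ℕ) : ℕ := Nat.card {x : ZMod m // x ^ s = -1}

-- generic product splitting
lemma card_sol_prod {R S T : Type*} [CommRing R] [CommRing S] [CommRing T]
    (eqv : R ≃+* S × T) (s : ℕ) (c : R) :
    Nat.card {x : R // x ^ s = c} =
      Nat.card {y : S // y ^ s = (eqv c).1} * Nat.card {z : T // z ^ s = (eqv c).2} := by
  rw [← Nat.card_prod]
  apply Nat.card_congr
  have e1 : {x : R // x ^ s = c} ≃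
      {w : S × T // w.1 ^ s = (eqv c).1 ∧ w.2 ^ s = (eqv c).2} := by
    refine Equiv.subtypeEquiv eqv.toEquiv (fun x => ?_)
    show x ^ s = c ↔ (eqv x).1 ^ s = (eqv c).1 ∧ (eqv x).2 ^ s = (eqv c).2
    constructor
    · intro h
      have : eqv x ^ s = eqv c := by rw [← map_pow, h]
      exact ⟨by rw [← this, Prod.pow_fst], by rw [← this, Prod.pow_snd]⟩
    · rintro ⟨h1, h2⟩
      apply eqv.injective
      rw [map_pow]
      exact Prod.ext (by rw [Prod.pow_fst, h1]) (by rw [Prod.pow_snd, h2])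
  exact e1.trans (Equiv.subtypeProdEquivProd (p := fun y : S => y ^ s = (eqv c).1) (q := fun z : T => z ^ s = (eqv c).2))

lemma fOne_mul {m₁ m₂ : ℕ} (h : m₁.Coprime m₂) (s : ℕ) :
    fOne s (m₁ * m₂) = fOne s m₁ * fOne s m₂ := by
  have := card_sol_prod (ZMod.chineseRemainder h) s 1
  simpa [fOne] using this

lemma fNeg_mul {m₁ m₂ : ℕ} (h : m₁.Coprime m₂) (s : ℕ) :
    fNeg s (m₁ * m₂) = fNeg s m₁ * fNeg s m₂ := by
  have := card_sol_prod (ZMod.chineseRemainder h) s (-1)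
  simpa [fNeg] using this

lemma fOne_one (s : ℕ) : fOne s 1 = 1 := by
  rw [fOne, Nat.card_eq_one_iff_unique]
  exact ⟨⟨fun a b => Subtype.ext (Subsingleton.elim _ _)⟩, ⟨⟨0, Subsingleton.elim _ _⟩⟩⟩

lemma fNeg_one (s : ℕ) : fNeg s 1 = 1 := by
  rw [fNeg, Nat.card_eq_one_iff_unique]
  exact ⟨⟨fun a b => Subtype.ext (Subsingleton.elim _ _)⟩, ⟨⟨0, Subsingleton.elim _ _⟩⟩⟩

lemma fOne_factorization {n : ℕ} (hn : n ≠ 0) (s : ℕ) :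
    fOne s n = ∏ p ∈ n.primeFactors, fOne s (p ^ n.factorization p) := by
  rw [Nat.multiplicative_factorization (fOne s) (fun x y h => fOne_mul h s) (fOne_one s) hn,
    Nat.prod_factorization_eq_prod_primeFactors]

lemma fNeg_factorization {n : ℕ} (hn : n ≠ 0) (s : ℕ) :
    fNeg s n = ∏ p ∈ n.primeFactors, fNeg s (p ^ n.factorization p) := by
  rw [Nat.multiplicative_factorization (fNeg s) (fun x y h => fNeg_mul h s) (fNeg_one s) hn,
    Nat.prod_factorization_eq_prod_primeFactors]


-- helper: extracting 2-adic valuation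
lemma two_pow_succ_dvd {d i t : ℕ} (hd : d ≠ 0) (ht : Odd t)
    (h1 : d ∣ 2 ^ (i + 1) * t) (h2 : ¬ d ∣ 2 ^ i * t) : 2 ^ (i + 1) ∣ d := by
  by_contra h
  apply h2
  have ht0 : t ≠ 0 := by rintro rfl; simp at ht
  have hv : d.factorization 2 ≤ i := by
    by_contra hv
    exact h ((Nat.Prime.pow_dvd_iff_le_factorization Nat.prime_two hd).mpr (by omega))
  have hsplit : 2 ^ d.factorization 2 * ordCompl[2] d = d :=
    Nat.ordProj_mul_ordCompl_eq_self d 2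
  have hcompl : ordCompl[2] d ∣ t := by
    have h3 := Nat.ordCompl_dvd_ordCompl_of_dvd h1 (p := 2)
    have hnd : ¬ 2 ∣ t := by have := Nat.odd_iff.mp ht; omega
    have hfact : (2 ^ (i + 1) * t).factorization 2 = i + 1 := by
      rw [Nat.factorization_mul (by positivity) ht0]
      simp [Nat.Prime.factorization_pow, Nat.factorization_eq_zero_of_not_dvd hnd, Nat.prime_two.factorization]
    rwa [hfact, Nat.mul_div_cancel_left _ (by positivity)] at h3
  calc d = 2 ^ d.factorization 2 * ordCompl[2] d := hsplit.symm
    _ ∣ 2 ^ i * t := mul_dvd_mul (pow_dvd_pow 2 hv) hcompl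


-- cyclic group count
lemma card_pow_eq_one_dvd {G : Type*} [CommGroup G] [Finite G] [IsCyclic G] (s : ℕ) :
    Nat.card {u : G // u ^ s = 1} ∣ Nat.gcd s (Nat.card G) := by
  set H : Subgroup G :=
    { carrier := {u | u ^ s = 1}
      mul_mem' := fun {a b} ha hb => by
        simp only [Set.mem_setOf_eq] at *
        rw [mul_pow, ha, hb, mul_one]
      one_mem' := one_pow s
      inv_mem' := fun {a} ha => by
        simp only [Set.mem_setOf_eq] at *
        rw [inv_pow, ha, inv_one] } with hH
  have hcard : Nat.card {u : G // u ^ s = 1} = Nat.card H := rfl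
  rw [hcard]
  refine Nat.dvd_gcd ?_ (Subgroup.card_subgroup_dvd_card H)
  obtain ⟨g, hg⟩ := IsCyclic.exists_ofOrder_eq_natCard (α := H)
  rw [← hg]
  rw [orderOf_dvd_iff_pow_eq_one]
  ext
  exact g.2

-- units equiv
noncomputable def card_pow_eq_one_units_equiv {M : Type*} [CommMonoid M] {s : ℕ} (hs : s ≠ 0) :
    {x : M // x ^ s = 1} ≃ {u : Mˣ // u ^ s = 1} where
  toFun := fun x => ⟨(IsUnit.of_mul_eq_one (a := x.1) (x.1 ^ (s - 1)) (by
      rw [← pow_succ']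
      rw [Nat.sub_add_cancel (Nat.one_le_iff_ne_zero.mpr hs)]
      exact x.2)).unit, by
    apply Units.ext
    rw [Units.val_pow_eq_pow_val, IsUnit.unit_spec, x.2, Units.val_one]⟩
  invFun := fun u => ⟨(u.1 : M), by
    rw [← Units.val_pow_eq_pow_val, u.2, Units.val_one]⟩
  left_inv := fun x => Subtype.ext rfl
  right_inv := fun u => Subtype.ext (Units.ext rfl)

lemma unitsMap_ker_card {p : ℕ} (hp : p.Prime) {e : ℕ} (he : e ≠ 0) :
    Nat.card (MonoidHom.ker (ZMod.unitsMap (dvd_pow_self p he))) = p ^ (e - 1) := by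
  haveI : Fact p.Prime := ⟨hp⟩
  haveI : NeZero (p ^ e) := ⟨pow_ne_zero e hp.ne_zero⟩
  set f := ZMod.unitsMap (dvd_pow_self p he)
  have hsurj : Function.Surjective f := ZMod.unitsMap_surjective _
  have h1 : Nat.card (ZMod (p ^ e))ˣ =
      Nat.card ((ZMod (p ^ e))ˣ ⧸ MonoidHom.ker f) * Nat.card (MonoidHom.ker f) :=
    Subgroup.card_eq_card_quotient_mul_card_subgroup _
  have h2 : Nat.card ((ZMod (p ^ e))ˣ ⧸ MonoidHom.ker f) = Nat.card (ZMod p)ˣ := by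
    rw [Nat.card_congr (QuotientGroup.quotientKerEquivRange f).toEquiv]
    rw [MonoidHom.range_eq_top_of_surjective f hsurj]
    exact Nat.card_congr Subgroup.topEquiv.toEquiv
  have hu1 : Nat.card (ZMod (p ^ e))ˣ = p ^ (e - 1) * (p - 1) := by
    rw [Nat.card_eq_fintype_card, ZMod.card_units_eq_totient,
      Nat.totient_prime_pow hp (Nat.pos_of_ne_zero he)]
  have hu2 : Nat.card (ZMod p)ˣ = p - 1 := by
    rw [Nat.card_eq_fintype_card, ZMod.card_units_eq_totient, Nat.totient_prime hp]
  rw [hu1, h2, hu2, mul_comm] at h1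
  have hp1 : 0 < p - 1 := by have := hp.two_le; omega
  exact (Nat.eq_of_mul_eq_mul_left hp1 h1.symm)

lemma fOne_prime_pow_le {p : ℕ} (hp : p.Prime) {e s : ℕ} (he : e ≠ 0) (hs : s ≠ 0)
    (hps : ¬ p ∣ s) : fOne s (p ^ e) ≤ Nat.gcd s (p - 1) := by
  haveI : Fact p.Prime := ⟨hp⟩
  haveI : NeZero (p ^ e) := ⟨pow_ne_zero e hp.ne_zero⟩
  rw [fOne, Nat.card_congr (card_pow_eq_one_units_equiv hs)]
  set f := ZMod.unitsMap (dvd_pow_self p he)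
  have hinj : Function.Injective
      (fun u : {u : (ZMod (p ^ e))ˣ // u ^ s = 1} =>
        (⟨f u.1, by rw [← map_pow, u.2, map_one]⟩ : {v : (ZMod p)ˣ // v ^ s = 1})) := by
    rintro ⟨a, ha⟩ ⟨b, hb⟩ hab
    simp only [Subtype.mk.injEq] at hab ⊢
    have hw : a * b⁻¹ ∈ MonoidHom.ker f := by
      rw [MonoidHom.mem_ker, map_mul, map_inv, hab, mul_inv_cancel]
    have h1 : orderOf (a * b⁻¹) ∣ s := by
      rw [orderOf_dvd_iff_pow_eq_one, mul_pow, ha, inv_pow, hb, inv_one, mul_one]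
    have h2 : orderOf (a * b⁻¹) ∣ p ^ (e - 1) := by
      rw [← unitsMap_ker_card hp he]
      exact Subgroup.orderOf_dvd_natCard _ hw
    have hcop : Nat.Coprime s (p ^ (e - 1)) :=
      Nat.Coprime.pow_right _ ((Nat.coprime_comm.mp (hp.coprime_iff_not_dvd.mpr hps)))
    have : orderOf (a * b⁻¹) = 1 :=
      Nat.dvd_one.mp (hcop ▸ Nat.dvd_gcd h1 h2)
    have := orderOf_eq_one_iff.mp this
    rwa [mul_inv_eq_one] at this
  calc Nat.card {u : (ZMod (p ^ e))ˣ // u ^ s = 1}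
      ≤ Nat.card {v : (ZMod p)ˣ // v ^ s = 1} := Nat.card_le_card_of_injective _ hinj
    _ ≤ Nat.gcd s (p - 1) := by
        refine Nat.le_of_dvd (Nat.gcd_pos_of_pos_left _ (Nat.pos_of_ne_zero hs)) ?_
        have hcu : Nat.card (ZMod p)ˣ = p - 1 := by
          rw [Nat.card_eq_fintype_card, ZMod.card_units_eq_totient, Nat.totient_prime hp]
        have := card_pow_eq_one_dvd (G := (ZMod p)ˣ) s
        rwa [hcu] at this

lemma fNeg_le_fOne {m s : ℕ} [NeZero m] (hs : s ≠ 0) : fNeg s m ≤ fOne s m := by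
  rcases isEmpty_or_nonempty {x : ZMod m // x ^ s = -1} with h | ⟨⟨x0, h0⟩⟩
  · rw [fNeg, Nat.card_of_isEmpty]; exact Nat.zero_le _
  · have hu : IsUnit x0 := IsUnit.of_mul_eq_one (a := x0) (-(x0 ^ (s - 1))) (by
      rw [mul_neg, ← pow_succ', Nat.sub_add_cancel (Nat.one_le_iff_ne_zero.mpr hs), h0, neg_neg])
    refine Nat.card_le_card_of_injective
      (fun x : {x : ZMod m // x ^ s = -1} =>
        (⟨x.1 * x0, by rw [mul_pow, x.2, h0, neg_mul_neg, one_mul]⟩ :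
          {y : ZMod m // y ^ s = 1})) ?_
    rintro ⟨a, ha⟩ ⟨b, hb⟩ hab
    simp only [Subtype.mk.injEq] at hab ⊢
    exact hu.mul_right_cancel hab

lemma fNeg_eq_zero {p e i t : ℕ} (hp : p.Prime) (hp2 : p ≠ 2) (he : e ≠ 0) (ht : Odd t)
    (hi : (p - 1).factorization 2 ≤ i) : fNeg (2 ^ i * t) (p ^ e) = 0 := by
  haveI : Fact p.Prime := ⟨hp⟩
  haveI : NeZero (p ^ e) := ⟨pow_ne_zero e hp.ne_zero⟩
  have hp3 : 3 ≤ p := by have := hp.two_le; omega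
  have h2pe : 2 < p ^ e := lt_of_lt_of_le (by omega)
    (le_trans (le_refl p) (Nat.le_self_pow he p))
  haveI : Fact (2 < p ^ e) := ⟨h2pe⟩
  rw [fNeg, Nat.card_eq_zero]
  left
  constructor
  rintro ⟨x, hx⟩
  have ht0 : t ≠ 0 := by rintro rfl; simp at ht
  have hs0 : 2 ^ i * t ≠ 0 := by positivity
  have hu : IsUnit x := IsUnit.of_mul_eq_one (a := x) (-(x ^ (2 ^ i * t - 1))) (by
    rw [mul_neg, ← pow_succ', Nat.sub_add_cancel (Nat.one_le_iff_ne_zero.mpr hs0), hx, neg_neg])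
  obtain ⟨u, rfl⟩ := hu
  have hune : ((u : (ZMod (p ^ e))ˣ) ^ (2 ^ i * t)) = -1 := by
    apply Units.ext
    rw [Units.val_pow_eq_pow_val, hx]
    rfl
  have hd1 : orderOf u ∣ 2 ^ (i + 1) * t := by
    rw [orderOf_dvd_iff_pow_eq_one, pow_succ, mul_comm (2 ^ i * 2) t, ← mul_assoc,
      mul_comm t (2 ^ i), pow_mul, hune]
    simp
  have hd2 : ¬ orderOf u ∣ 2 ^ i * t := by
    rw [orderOf_dvd_iff_pow_eq_one, hune]
    intro h
    have : (-1 : ZMod (p ^ e)) = 1 := by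
      have := congrArg (Units.val) h
      simpa using this
    exact ZMod.neg_one_ne_one this
  have hdvd : 2 ^ (i + 1) ∣ orderOf u :=
    two_pow_succ_dvd (orderOf_pos u).ne' ht hd1 hd2
  have hcard : orderOf u ∣ p ^ (e - 1) * (p - 1) := by
    have := orderOf_dvd_natCard u
    rwa [Nat.card_eq_fintype_card, ZMod.card_units_eq_totient,
      Nat.totient_prime_pow hp (Nat.pos_of_ne_zero he)] at this
  have hfinal : 2 ^ (i + 1) ∣ p - 1 := by
    have h1 : 2 ^ (i + 1) ∣ p ^ (e - 1) * (p - 1) := hdvd.trans hcard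
    have hcop : Nat.Coprime (2 ^ (i + 1)) (p ^ (e - 1)) :=
      Nat.Coprime.pow _ _ ((Nat.coprime_primes Nat.prime_two hp).mpr (fun h => hp2 h.symm))
    exact (Nat.Coprime.dvd_of_dvd_mul_left hcop h1)
  have := (Nat.Prime.pow_dvd_iff_le_factorization Nat.prime_two (by omega : p - 1 ≠ 0)).mp hfinal
  omega

lemma ncard_biUnion_le {α : Type*} [Finite α] (k : ℕ) (B : ℕ → Set α) :
    (⋃ i ∈ Finset.range k, B i).ncard ≤ ∑ i ∈ Finset.range k, (B i).ncard := by
  induction k with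
  | zero => simp
  | succ k ih =>
    rw [Finset.range_add_one, Finset.sum_insert Finset.notMem_range_self]
    have : (⋃ i ∈ insert k (Finset.range k), B i) = B k ∪ ⋃ i ∈ Finset.range k, B i := by
      simp [Set.biUnion_insert]
    rw [this]
    exact le_trans (Set.ncard_union_le _ _) (by omega)

lemma count_le_sum (n : ℕ) [NeZero n] :
    strongLiarCount n ≤ fOne (oddPart (n - 1)) n +
      ∑ i ∈ Finset.range ((n - 1).factorization 2), fNeg (2 ^ i * oddPart (n - 1)) n := by
  classical
  set t := oddPart (n - 1)
  set k := (n - 1).factorization 2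
  have hsub : strongLiars n ⊆ {a : ZMod n | a ^ t = 1} ∪
      ⋃ i ∈ Finset.range k, {a : ZMod n | a ^ (2 ^ i * t) = -1} := by
    rintro x (hx | ⟨i, hik, hx⟩)
    · exact Or.inl hx
    · exact Or.inr (Set.mem_biUnion (Finset.mem_range.mpr hik) hx)
  have h1 : strongLiarCount n ≤ ({a : ZMod n | a ^ t = 1} ∪
      ⋃ i ∈ Finset.range k, {a : ZMod n | a ^ (2 ^ i * t) = -1}).ncard := by
    rw [strongLiarCount, Nat.card_coe_set_eq]
    exact Set.ncard_le_ncard hsub (Set.toFinite _)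
  refine le_trans h1 (le_trans (Set.ncard_union_le _ _) ?_)
  have h2 : fOne t n = {a : ZMod n | a ^ t = 1}.ncard := by
    rw [fOne, ← Nat.card_coe_set_eq]
    rfl
  have h3 : ∀ i, fNeg (2 ^ i * t) n = {a : ZMod n | a ^ (2 ^ i * t) = -1}.ncard := by
    intro i
    rw [fNeg, ← Nat.card_coe_set_eq]
    rfl
  rw [h2]
  gcongr
  refine le_trans (ncard_biUnion_le k _) ?_
  refine Finset.sum_le_sum (fun i _ => ?_)
  rw [h3]


lemma geom_L1 {c : ℕ} (hc : 8 ≤ c) {m : ℕ} (hm : 1 ≤ m) :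
    4 * (1 + ∑ i ∈ Finset.range m, c ^ i) ≤ c ^ m := by
  induction m with
  | zero => omega
  | succ m ih =>
    rcases Nat.eq_or_lt_of_le hm with h | h
    · simp [← h]; omega
    · have hm1 : 1 ≤ m := by omega
      have := ih hm1
      rw [Finset.sum_range_succ, pow_succ]
      have hcm : 8 * c ^ m ≤ c ^ m * c := by rw [mul_comm]; exact Nat.mul_le_mul_left _ hc
      omega

lemma geom_L2 {m : ℕ} (hm : 1 ≤ m) :
    4 * (1 + ∑ i ∈ Finset.range m, 4 ^ i) ≤ 2 * 4 ^ m := by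
  induction m with
  | zero => omega
  | succ m ih =>
    rcases Nat.eq_or_lt_of_le hm with h | h
    · simp [← h]
    · have hm1 : 1 ≤ m := by omega
      have := ih hm1
      rw [Finset.sum_range_succ, pow_succ]
      omega

lemma geom_L4 (m : ℕ) : 1 + ∑ i ∈ Finset.range m, 2 ^ i ≤ 2 ^ m := by
  induction m with
  | zero => simp
  | succ m ih =>
    rw [Finset.sum_range_succ, pow_succ]
    omega

lemma gcd_two_pow_mul_dvd {i t M : ℕ} (ht : Odd t) :
    Nat.gcd (2 ^ i * t) M ∣ 2 ^ i * Nat.gcd t (ordCompl[2] M) := by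
  have ht0 : t ≠ 0 := by rintro rfl; simp at ht
  have hnd : ¬ 2 ∣ t := by have := Nat.odd_iff.mp ht; omega
  set d := Nat.gcd (2 ^ i * t) M with hd
  have hst0 : 2 ^ i * t ≠ 0 := by positivity
  have hd0 : d ≠ 0 := (Nat.gcd_pos_of_pos_left M (Nat.pos_of_ne_zero hst0)).ne'
  have hdvd1 : d ∣ 2 ^ i * t := Nat.gcd_dvd_left _ _
  have hdvd2 : d ∣ M := Nat.gcd_dvd_right _ _
  have hfact : (2 ^ i * t).factorization 2 = i := by
    rw [Nat.factorization_mul (by positivity) ht0]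
    simp [Nat.Prime.factorization_pow, Nat.factorization_eq_zero_of_not_dvd hnd,
      Nat.prime_two.factorization]
  have hv : d.factorization 2 ≤ i := by
    have hle := (Nat.factorization_le_iff_dvd hd0 hst0).mpr hdvd1
    have := Finsupp.le_def.mp hle 2
    omega
  have hoc1 : ordCompl[2] d ∣ t := by
    have h3 := Nat.ordCompl_dvd_ordCompl_of_dvd hdvd1 2
    rwa [hfact, Nat.mul_div_cancel_left _ (by positivity)] at h3
  have hoc2 : ordCompl[2] d ∣ ordCompl[2] M := Nat.ordCompl_dvd_ordCompl_of_dvd hdvd2 2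
  calc d = 2 ^ d.factorization 2 * ordCompl[2] d := (Nat.ordProj_mul_ordCompl_eq_self d 2).symm
    _ ∣ 2 ^ i * Nat.gcd t (ordCompl[2] M) :=
      mul_dvd_mul (pow_dvd_pow 2 hv) (Nat.dvd_gcd hoc1 hoc2)

/-- If `n > 9` is odd and composite then `|S(n)| ≤ φ(n)/4`. -/
theorem strongLiarCount_le_totient_div_four (n : ℕ) (hn : 9 < n) (hodd : Odd n)
    (hcomp : ¬ n.Prime) : 4 * strongLiarCount n ≤ n.totient := by
  classical
  have hn0 : n ≠ 0 := by omega
  haveI : NeZero n := ⟨hn0⟩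
  have hn1 : n - 1 ≠ 0 := by omega
  set t := oddPart (n - 1) with htdef
  set k := (n - 1).factorization 2 with hkdef
  have h2t : ¬ 2 ∣ t := Nat.not_dvd_ordCompl Nat.prime_two hn1
  have ht : Odd t := Nat.odd_iff.mpr (by omega)
  have ht0 : t ≠ 0 := (Nat.ordCompl_pos 2 hn1).ne'
  have htdvd : t ∣ n - 1 := Nat.ordCompl_dvd (n - 1) 2
  have htn : 2 ^ k * t = n - 1 := Nat.ordProj_mul_ordCompl_eq_self (n - 1) 2
  have hk1 : 1 ≤ k := Nat.Prime.factorization_pos_of_dvd Nat.prime_two hn1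
    (by obtain ⟨j, hj⟩ := hodd; omega)
  set P := n.primeFactors with hPdef
  have hPne : P.Nonempty := Nat.nonempty_primeFactors.mpr (by omega)
  set a : ℕ → ℕ := fun p => (p - 1).factorization 2 with hadef
  set O : ℕ → ℕ := fun p => ordCompl[2] (p - 1) with hOdef
  set g : ℕ → ℕ := fun p => Nat.gcd t (O p) with hgdef
  set E : ℕ → ℕ := fun p => n.factorization p with hEdef
  -- per prime facts
  have hprime : ∀ p ∈ P, p.Prime := fun p hp => Nat.prime_of_mem_primeFactors hp
  have hp3 : ∀ p ∈ P, 3 ≤ p := by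
    intro p hp
    have h2 := (hprime p hp).two_le
    rcases Nat.eq_or_lt_of_le h2 with h | h
    · exfalso
      have : 2 ∣ n := h ▸ Nat.dvd_of_mem_primeFactors hp
      have := Nat.odd_iff.mp hodd
      omega
    · omega
  have hE1 : ∀ p ∈ P, 1 ≤ E p := fun p hp =>
    Nat.Prime.factorization_pos_of_dvd (hprime p hp) hn0 (Nat.dvd_of_mem_primeFactors hp)
  have hp1ne : ∀ p ∈ P, p - 1 ≠ 0 := fun p hp => by have := hp3 p hp; omega
  have ha1 : ∀ p ∈ P, 1 ≤ a p := by
    intro p hp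
    refine Nat.Prime.factorization_pos_of_dvd Nat.prime_two (hp1ne p hp) ?_
    have hnd : ¬ 2 ∣ p := by
      intro h2p
      have : 2 ∣ n := h2p.trans (Nat.dvd_of_mem_primeFactors hp)
      have := Nat.odd_iff.mp hodd
      omega
    have := hp3 p hp
    omega
  have hpt : ∀ p ∈ P, ¬ p ∣ t := by
    intro p hp hdvd
    have h1 : p ∣ n - 1 := hdvd.trans htdvd
    have h2 : p ∣ n := Nat.dvd_of_mem_primeFactors hp
    have h3 : p ∣ n - (n - 1) := Nat.dvd_sub h2 h1
    have : n - (n - 1) = 1 := by omega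
    rw [this] at h3
    have := (hprime p hp).two_le
    have := Nat.le_of_dvd one_pos h3
    omega
  have hsplit : ∀ p ∈ P, 2 ^ a p * O p = p - 1 := fun p hp =>
    Nat.ordProj_mul_ordCompl_eq_self (p - 1) 2
  have hOodd : ∀ p ∈ P, ¬ 2 ∣ O p := fun p hp =>
    Nat.not_dvd_ordCompl Nat.prime_two (hp1ne p hp)
  have hgO : ∀ p ∈ P, g p ∣ O p := fun p hp => Nat.gcd_dvd_right _ _
  have hO0 : ∀ p ∈ P, O p ≠ 0 := fun p hp => (Nat.ordCompl_pos 2 (hp1ne p hp)).ne'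
  have hg0 : ∀ p ∈ P, g p ≠ 0 := fun p hp =>
    (Nat.gcd_pos_of_pos_left _ (Nat.pos_of_ne_zero ht0)).ne'
  -- counting bounds per prime power
  have hfOne_le : ∀ p ∈ P, fOne t (p ^ E p) ≤ g p := by
    intro p hp
    refine le_trans (fOne_prime_pow_le (hprime p hp) (by have := hE1 p hp; omega) ht0
      (hpt p hp)) ?_
    have h1 : Nat.gcd t (p - 1) ∣ 1 * Nat.gcd t (O p) := by
      have := gcd_two_pow_mul_dvd (i := 0) (t := t) (M := p - 1) ht
      simpa using this
    rw [one_mul] at h1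
    exact Nat.le_of_dvd (Nat.pos_of_ne_zero (hg0 p hp)) h1
  have hfNeg_le : ∀ p ∈ P, ∀ i : ℕ, fNeg (2 ^ i * t) (p ^ E p) ≤ 2 ^ i * g p := by
    intro p hp i
    haveI : NeZero (p ^ E p) := ⟨pow_ne_zero _ (hprime p hp).ne_zero⟩
    have hs0 : 2 ^ i * t ≠ 0 := by positivity
    refine le_trans (fNeg_le_fOne hs0) ?_
    refine le_trans (fOne_prime_pow_le (hprime p hp) (by have := hE1 p hp; omega) hs0 ?_) ?_
    · intro hdvd
      have hcop : Nat.Coprime p 2 := Nat.coprime_primes (hprime p hp) Nat.prime_two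
        |>.mpr (by have := hp3 p hp; omega)
      have : p ∣ t := (Nat.Coprime.dvd_of_dvd_mul_left (hcop.pow_right i) hdvd)
      exact hpt p hp this
    · exact Nat.le_of_dvd (Nat.pos_of_ne_zero
        (mul_ne_zero (by positivity) (hg0 p hp))) (gcd_two_pow_mul_dvd ht)
  have hfNeg_zero : ∀ p ∈ P, ∀ i : ℕ, a p ≤ i → fNeg (2 ^ i * t) (p ^ E p) = 0 := by
    intro p hp i hi
    exact fNeg_eq_zero (hprime p hp) (by have := hp3 p hp; omega)
      (by have := hE1 p hp; omega) ht hi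
  -- global quantities
  set r := P.card with hrdef
  set ν := P.inf' hPne a with hνdef
  set m := min k ν with hmdef
  have hνa : ∀ p ∈ P, ν ≤ a p := fun p hp => Finset.inf'_le a hp
  have hν1 : 1 ≤ ν := Finset.le_inf' hPne a ha1
  have hm1 : 1 ≤ m := le_min hk1 hν1
  set G := ∏ p ∈ P, g p with hGdef
  have hbound1 : fOne t n ≤ G := by
    rw [fOne_factorization hn0]
    exact Finset.prod_le_prod (fun p _ => Nat.zero_le _) hfOne_le
  have hboundNeg : ∀ i : ℕ, i < ν → fNeg (2 ^ i * t) n ≤ 2 ^ (i * r) * G := by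
    intro i hi
    rw [fNeg_factorization hn0]
    calc ∏ p ∈ P, fNeg (2 ^ i * t) (p ^ E p)
        ≤ ∏ p ∈ P, (2 ^ i * g p) :=
          Finset.prod_le_prod (fun p _ => Nat.zero_le _) (fun p hp => hfNeg_le p hp i)
      _ = 2 ^ (i * r) * G := by
          rw [Finset.prod_mul_distrib, Finset.prod_const, ← pow_mul]
  have hboundNeg0 : ∀ i : ℕ, ν ≤ i → fNeg (2 ^ i * t) n = 0 := by
    intro i hi
    rw [fNeg_factorization hn0]
    obtain ⟨p, hp, hap⟩ := Finset.exists_mem_eq_inf' hPne a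
    exact Finset.prod_eq_zero hp (hfNeg_zero p hp i (by omega))
  have hsum : ∑ i ∈ Finset.range k, fNeg (2 ^ i * t) n ≤
      ∑ i ∈ Finset.range m, 2 ^ (i * r) * G := by
    have hsub : Finset.range m ⊆ Finset.range k :=
      Finset.range_subset_range.mpr (min_le_left _ _)
    have heq : ∑ i ∈ Finset.range k, fNeg (2 ^ i * t) n =
        ∑ i ∈ Finset.range m, fNeg (2 ^ i * t) n := by
      refine (Finset.sum_subset hsub ?_).symm
      intro i hik him
      have hik' := Finset.mem_range.mp hik
      have him' : ¬ i < m := fun h => him (Finset.mem_range.mpr h)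
      have : ν ≤ i := by
        by_contra hc
        exact him' (lt_min hik' (by omega))
      exact hboundNeg0 i this
    rw [heq]
    refine Finset.sum_le_sum (fun i hi => ?_)
    have hi' := Finset.mem_range.mp hi
    exact hboundNeg i (lt_of_lt_of_le hi' (min_le_right _ _))
  have hcount : strongLiarCount n ≤ (1 + ∑ i ∈ Finset.range m, 2 ^ (i * r)) * G := by
    refine le_trans (count_le_sum n) ?_
    calc fOne t n + ∑ i ∈ Finset.range k, fNeg (2 ^ i * t) n
        ≤ G + ∑ i ∈ Finset.range m, 2 ^ (i * r) * G := Nat.add_le_add hbound1 hsum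
      _ = (1 + ∑ i ∈ Finset.range m, 2 ^ (i * r)) * G := by
          rw [add_mul, one_mul, ← Finset.sum_mul]
  -- totient decomposition
  set A := ∑ p ∈ P, a p with hAdef
  set D := ∏ p ∈ P, (p ^ (E p - 1) * (O p / g p)) with hDdef
  have htot : n.totient = 2 ^ A * (D * G) := by
    rw [Nat.totient_eq_prod_factorization hn0,
      Nat.prod_factorization_eq_prod_primeFactors]
    have : ∀ p ∈ P, p ^ (E p - 1) * (p - 1) =
        2 ^ a p * (p ^ (E p - 1) * (O p / g p) * g p) := by
      intro p hp
      obtain ⟨c, hc⟩ := hgO p hp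
      have hdiv : O p / g p = c := by
        rw [hc, Nat.mul_div_cancel_left _ (Nat.pos_of_ne_zero (hg0 p hp))]
      rw [← hsplit p hp, hdiv, hc]
      ring
    rw [Finset.prod_congr rfl this, Finset.prod_mul_distrib, Finset.prod_mul_distrib,
      Finset.prod_pow_eq_pow_sum]
  have hAm : r * m ≤ A := by
    have := Finset.card_nsmul_le_sum P a m (fun p hp => le_trans (min_le_right k ν) (hνa p hp))
    simpa [smul_eq_mul] using this
  have hD1 : 1 ≤ D := by
    refine Finset.one_le_prod' (fun p hp => ?_)
    have h1 : 1 ≤ p ^ (E p - 1) := Nat.one_le_pow _ _ (by have := hp3 p hp; omega)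
    have h2 : 1 ≤ O p / g p :=
      Nat.one_le_div_iff (Nat.pos_of_ne_zero (hg0 p hp)) |>.mpr
        (Nat.le_of_dvd (Nat.pos_of_ne_zero (hO0 p hp)) (hgO p hp))
    exact Nat.one_le_iff_ne_zero.mpr (by positivity)
  have hr1 : 1 ≤ r := Finset.card_pos.mpr hPne
  clear_value D
  -- KEY inequality
  have hKEY : 4 * (1 + ∑ i ∈ Finset.range m, 2 ^ (i * r)) ≤ 2 ^ A * D := by
    rcases lt_or_ge r 3 with hr3 | hr3
    · have hr12 : r = 1 ∨ r = 2 := by omega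
      rcases hr12 with hr | hr
      · -- one prime factor
        have hcard : P.card = 1 := by rw [← hrdef, hr]
        obtain ⟨p, hPp⟩ := Finset.card_eq_one.mp hcard
        have hpP : p ∈ P := by rw [hPp]; exact Finset.mem_singleton_self p
        have hn_eq : n = p ^ E p := by
          have h := Nat.factorization_prod_pow_eq_self hn0
          rw [Nat.prod_factorization_eq_prod_primeFactors] at h
          rw [← h, ← hPdef, hPp, Finset.prod_singleton]
        have hE2 : 2 ≤ E p := by
          by_contra h
          have h1 := hE1 p hpP
          have hE : E p = 1 := by omega
          rw [hE, pow_one] at hn_eq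
          exact hcomp (hn_eq ▸ hprime p hpP)
        have hp4 : 4 ≤ p ^ (E p - 1) := by
          have hp3' := hp3 p hpP
          rcases eq_or_ne p 3 with h3 | h3
          · have hE3 : 3 ≤ E p := by
              by_contra h
              have : E p = 2 := by omega
              rw [this, h3] at hn_eq
              norm_num at hn_eq
              omega
            calc (4:ℕ) ≤ 3 ^ 2 := by norm_num
              _ ≤ p ^ 2 := Nat.pow_le_pow_left hp3' 2
              _ ≤ p ^ (E p - 1) := Nat.pow_le_pow_right (by omega) (by omega)
          · have hp5 : 5 ≤ p := by
              have h4 : p ≠ 4 := by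
                rintro rfl
                exact absurd (hprime 4 hpP) (by norm_num)
              omega
            calc (4:ℕ) ≤ p := by omega
              _ = p ^ 1 := (pow_one p).symm
              _ ≤ p ^ (E p - 1) := Nat.pow_le_pow_right (by omega) (by omega)
        have hD4 : 4 ≤ D := by
          rw [hDdef, hPp, Finset.prod_singleton]
          have h2 : 1 ≤ O p / g p :=
            (Nat.one_le_div_iff (Nat.pos_of_ne_zero (hg0 p hpP))).mpr
              (Nat.le_of_dvd (Nat.pos_of_ne_zero (hO0 p hpP)) (hgO p hpP))
          calc 4 ≤ p ^ (E p - 1) := hp4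
            _ ≤ p ^ (E p - 1) * (O p / g p) := Nat.le_mul_of_pos_right _ (by omega)
        have hsum' : ∑ i ∈ Finset.range m, 2 ^ (i * r) = ∑ i ∈ Finset.range m, 2 ^ i :=
          Finset.sum_congr rfl (fun i _ => by rw [hr, mul_one])
        rw [hsum']
        have hmA : m ≤ A := by rw [hr, one_mul] at hAm; exact hAm
        calc 4 * (1 + ∑ i ∈ Finset.range m, 2 ^ i) ≤ 4 * 2 ^ m :=
              Nat.mul_le_mul_left 4 (geom_L4 m)
          _ = 2 ^ m * 4 := by ring
          _ ≤ 2 ^ A * D := Nat.mul_le_mul (Nat.pow_le_pow_right (by norm_num) hmA) hD4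
      · -- two prime factors
        have hsum4 : ∑ i ∈ Finset.range m, 2 ^ (i * r) = ∑ i ∈ Finset.range m, 4 ^ i :=
          Finset.sum_congr rfl (fun i _ => by
            rw [hr, mul_comm i 2, pow_mul]; norm_num)
        rw [hsum4]
        have hA2m : 2 * m ≤ A := by rw [hr] at hAm; exact hAm
        have h4m : (4:ℕ) ^ m = 2 ^ (2 * m) := by rw [pow_mul]; norm_num
        rcases lt_or_ge (2 * m) A with hA21 | hA22
        · calc 4 * (1 + ∑ i ∈ Finset.range m, 4 ^ i) ≤ 2 * 4 ^ m := geom_L2 hm1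
            _ = 2 ^ (2 * m + 1) := by rw [h4m, pow_succ]; ring
            _ ≤ 2 ^ A := Nat.pow_le_pow_right (by norm_num) (by omega)
            _ ≤ 2 ^ A * D := Nat.le_mul_of_pos_right _ (by omega)
        · have hAeq : A = 2 * m := le_antisymm hA22 hA2m
          rcases lt_or_ge D 3 with hD2 | hD3
          · -- exceptional case: contradiction
            exfalso
            have hD1' := hD1
            have hDodd : ¬ 2 ∣ D := by
              rw [hDdef]
              intro h
              obtain ⟨p, hpP, hdvd⟩ := Nat.prime_two.prime.exists_mem_finset_dvd h
              rcases (Nat.prime_two.prime.dvd_mul).mp hdvd with h1 | h2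
              · have hh1 := Nat.Prime.dvd_of_dvd_pow Nat.prime_two h1
                have hh3 := (Nat.prime_dvd_prime_iff_eq Nat.prime_two (hprime p hpP)).mp hh1
                have hh2 := hp3 p hpP
                omega
              · exact hOodd p hpP (h2.trans (Nat.div_dvd_of_dvd (hgO p hpP)))
            have hDone : D = 1 := by
              rcases (by omega : D = 1 ∨ D = 2) with h | h
              · exact h
              · exact absurd (by simp [h] : 2 ∣ D) hDodd
            obtain ⟨p, q, hpq, hPpq⟩ := Finset.card_eq_two.mp (by rw [← hrdef, hr])
            have hpP : p ∈ P := by rw [hPpq]; simp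
            have hqP : q ∈ P := by rw [hPpq]; simp
            have hDprod : (p ^ (E p - 1) * (O p / g p)) * (q ^ (E q - 1) * (O q / g q)) = 1 := by
              rw [hDdef, hPpq, Finset.prod_pair hpq] at hDone
              exact hDone
            have hfac1 : p ^ (E p - 1) * (O p / g p) = 1 :=
              Nat.dvd_one.mp ⟨_, hDprod.symm⟩
            have hfac2 : q ^ (E q - 1) * (O q / g q) = 1 :=
              Nat.dvd_one.mp ⟨_, by rw [mul_comm] at hDprod; exact hDprod.symm⟩
            have hsumA : a p + a q = A := by
              rw [hAdef, hPpq, Finset.sum_pair hpq]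
            have hmν : m ≤ ν := min_le_right _ _
            have hmk : m ≤ k := min_le_left _ _
            have hapm : a p = m ∧ a q = m := by
              have h1 : m ≤ a p := le_trans hmν (hνa p hpP)
              have h2 : m ≤ a q := le_trans hmν (hνa q hqP)
              omega
            have key : ∀ x ∈ P, x ^ (E x - 1) * (O x / g x) = 1 → a x ≤ k →
                E x = 1 ∧ x - 1 ∣ n - 1 := by
              intro x hx h hax
              have hfx : x ^ (E x - 1) = 1 := Nat.dvd_one.mp ⟨_, h.symm⟩
              have hgx : O x / g x = 1 := Nat.dvd_one.mp ⟨_, by rw [mul_comm] at h; exact h.symm⟩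
              have hEx : E x = 1 := by
                by_contra hc
                have h1 := hE1 x hx
                have h2 : 1 ≤ E x - 1 := by omega
                have := hp3 x hx
                have hle : x ≤ x ^ (E x - 1) := Nat.le_self_pow (by omega) x
                omega
              have hOg : O x = g x := by
                obtain ⟨c, hc⟩ := hgO x hx
                have hdc : O x / g x = c := by
                  rw [hc, Nat.mul_div_cancel_left _ (Nat.pos_of_ne_zero (hg0 x hx))]
                have hc1 : c = 1 := by rw [← hdc, hgx]
                rw [hc, hc1, mul_one]
              have hOt : O x ∣ t := hOg ▸ Nat.gcd_dvd_left t (O x)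
              refine ⟨hEx, ?_⟩
              rw [← htn, ← hsplit x hx]
              exact mul_dvd_mul (pow_dvd_pow 2 hax) hOt
            obtain ⟨hEp, hdp⟩ := key p hpP hfac1 (by omega)
            obtain ⟨hEq', hdq⟩ := key q hqP hfac2 (by omega)
            have hEp'' : n.factorization p = 1 := hEp
            have hEq'' : n.factorization q = 1 := hEq'
            have hnpq : n = p * q := by
              have h := Nat.factorization_prod_pow_eq_self hn0
              rw [Nat.prod_factorization_eq_prod_primeFactors] at h
              rw [← h, ← hPdef, hPpq, Finset.prod_pair hpq,
                hEp'', hEq'', pow_one, pow_one]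
            have hp3' := hp3 p hpP
            have hq3' := hp3 q hqP
            have hdiv : ∀ x y : ℕ, 3 ≤ x → 3 ≤ y → x - 1 ∣ x * y - 1 → x - 1 ∣ y - 1 := by
              intro x y hx hy hd
              have heq : x * y - 1 = (x - 1) * y + (y - 1) := by
                have hx1 : 1 ≤ x := by omega
                have hy1 : 1 ≤ y := by omega
                have h1 : 1 ≤ x * y := Nat.one_le_iff_ne_zero.mpr (by positivity)
                zify [hx1, hy1, h1]
                ring
              have h2 : x - 1 ∣ (x - 1) * y := dvd_mul_right _ _
              have h3 := Nat.dvd_sub hd h2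
              have h4 : x * y - 1 - (x - 1) * y = y - 1 := by
                set w := (x - 1) * y
                omega
              rwa [h4] at h3
            have hd1 : p - 1 ∣ q - 1 := hdiv p q hp3' hq3' (hnpq ▸ hdp)
            have hd2 : q - 1 ∣ p - 1 := hdiv q p hq3' hp3' (by rw [mul_comm]; exact hnpq ▸ hdq)
            have : p - 1 = q - 1 := Nat.dvd_antisymm hd1 hd2
            have : p = q := by omega
            exact hpq this
          · -- D ≥ 3
            calc 4 * (1 + ∑ i ∈ Finset.range m, 4 ^ i) ≤ 2 * 4 ^ m := geom_L2 hm1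
              _ ≤ 4 ^ m * D := by
                  have : 2 * 4 ^ m ≤ 4 ^ m * 3 := by omega
                  exact le_trans this (Nat.mul_le_mul_left _ hD3)
              _ = 2 ^ A * D := by rw [hAeq, ← h4m]
    · -- at least three prime factors
      have hc8 : (8:ℕ) ≤ 2 ^ r := by
        calc (8:ℕ) = 2 ^ 3 := by norm_num
          _ ≤ 2 ^ r := Nat.pow_le_pow_right (by norm_num) hr3
      have hsum' : ∑ i ∈ Finset.range m, 2 ^ (i * r) = ∑ i ∈ Finset.range m, (2 ^ r) ^ i :=
        Finset.sum_congr rfl (fun i _ => by rw [← pow_mul, mul_comm])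
      rw [hsum']
      calc 4 * (1 + ∑ i ∈ Finset.range m, (2 ^ r) ^ i) ≤ (2 ^ r) ^ m := geom_L1 hc8 hm1
        _ = 2 ^ (r * m) := by rw [← pow_mul]
        _ ≤ 2 ^ A := Nat.pow_le_pow_right (by norm_num) hAm
        _ ≤ 2 ^ A * D := Nat.le_mul_of_pos_right _ (by omega)
  -- conclude
  calc 4 * strongLiarCount n ≤ 4 * ((1 + ∑ i ∈ Finset.range m, 2 ^ (i * r)) * G) :=
        Nat.mul_le_mul_left 4 hcount
    _ = (4 * (1 + ∑ i ∈ Finset.range m, 2 ^ (i * r))) * G := by ring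
    _ ≤ (2 ^ A * D) * G := Nat.mul_le_mul_right G hKEY
    _ = n.totient := by rw [htot]; ring
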